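/- Let A be a finite-dimensional algebra, I an ideal of A, e an idempotent of A, and suppose the canonical map eAe → eAe/eIe admits an algebra section (retraction). Define A[I] as the K-vector space (eAe/eIe) ⊕ I with multiplication (b,x)·(c,y) = (bc, by + xc + xy), where I is regarded as an (eAe/eIe)-bimodule. Then A[I] is an associative K-algebra with identity element (e + eIe, 1_A − e), and the subset {(0,x) | x ∈ I} is a two-sided ideal of A[I] isomorphic to I. -/

import Mathlib

variable (K A : Type) [Field K] [Ring A] [Algebra K A]

/-- The corner space `eAe = {x | e*x*e = x}` as a `K`-subspace of `A`. -/
def corner (e : A) : Submodule K A where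
  carrier := {x | e * x * e = x}
  add_mem' := by
    intro x y hx hy
    simp only [Set.mem_setOf_eq] at *
    rw [mul_add, add_mul, hx, hy]
  zero_mem' := by simp
  smul_mem' := by
    intro k x hx
    simp only [Set.mem_setOf_eq] at *
    rw [mul_smul_comm, smul_mul_assoc, hx]

/-- A two-sided ideal `I`, viewed as a `K`-subspace of `A`. -/
def ISub (I : TwoSidedIdeal A) : Submodule K A where
  carrier := I
  add_mem' hx hy := I.add_mem hx hy
  zero_mem' := I.zero_mem
  smul_mem' k x hx := by
    rw [Algebra.smul_def]
    exact I.mul_mem_left _ _ hx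

/-- The subspace `eIe` of `A`. -/
def eIeSub (I : TwoSidedIdeal A) (e : A) : Submodule K A where
  carrier := {z | ∃ y ∈ I, z = e * y * e}
  add_mem' := by
    rintro x y ⟨y₁, hy₁, rfl⟩ ⟨y₂, hy₂, rfl⟩
    exact ⟨y₁ + y₂, I.add_mem hy₁ hy₂, by rw [mul_add, add_mul]⟩
  zero_mem' := ⟨0, I.zero_mem, by simp⟩
  smul_mem' := by
    rintro k x ⟨y, hy, rfl⟩
    refine ⟨k • y, ?_, by rw [mul_smul_comm, smul_mul_assoc]⟩
    rw [Algebra.smul_def]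
    exact I.mul_mem_left _ _ hy

lemma corner_mul_mem {e : A} (he : e * e = e) {x y : A}
    (hx : x ∈ corner K A e) (hy : y ∈ corner K A e) : x * y ∈ corner K A e := by
  have hx' : e * x * e = x := hx
  have hy' : e * y * e = y := hy
  have h1 : e * x = x := by rw [← hx', ← mul_assoc, ← mul_assoc, he]
  have h2 : y * e = y := by rw [← hy', mul_assoc, he]
  show e * (x * y) * e = x * y
  rw [← mul_assoc, h1, mul_assoc, h2]

lemma e_mem_corner {e : A} (he : e * e = e) : e ∈ corner K A e := by
  show e * e * e = e
  rw [he, he]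

/-- The quotient `eAe / eIe`, i.e. the algebra `B ≅ A/I`, as a `K`-vector space. -/
abbrev CornerQuot (I : TwoSidedIdeal A) (e : A) : Type :=
  ↥(corner K A e) ⧸ ((eIeSub K A I e).comap (corner K A e).subtype)

/-- The underlying `K`-vector space `(eAe/eIe) ⊕ I` of the algebra `A[I]`. -/
abbrev AICarrier (I : TwoSidedIdeal A) (e : A) : Type :=
  CornerQuot K A I e × ↥(ISub K A I)

/-- The multiplication `(b,x)·(c,y) = (bc, by + xc + xy)` of `A[I]`, where the
bimodule actions of `eAe/eIe` on `I` are given by `lact` and `ract` and the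
multiplication of `eAe/eIe` by `mQ`. -/
noncomputable def aiMul (I : TwoSidedIdeal A) (e : A)
    (mQ : CornerQuot K A I e → CornerQuot K A I e → CornerQuot K A I e)
    (lact : CornerQuot K A I e → A → A) (ract : A → CornerQuot K A I e → A)
    (hlactI : ∀ b y, y ∈ ISub K A I → lact b y ∈ ISub K A I)
    (hractI : ∀ y b, y ∈ ISub K A I → ract y b ∈ ISub K A I)
    (p q : AICarrier K A I e) : AICarrier K A I e :=
  (mQ p.1 q.1,
    ⟨lact p.1 q.2.1 + ract p.2.1 q.1 + p.2.1 * q.2.1,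
      Submodule.add_mem _
        (Submodule.add_mem _ (hlactI _ _ q.2.2) (hractI _ _ p.2.2))
        (I.mul_mem_left _ _ q.2.2)⟩)

/-- Let `A` be a finite-dimensional `K`-algebra, `I` a two-sided ideal,
`e` an idempotent which is a residual identity of `A/I`, such that the canonical map
`eAe → eAe/eIe` is a retraction (admits an algebra section `σ`).  Let the
multiplication `mQ` of `eAe/eIe` and its bimodule actions `lact`, `ract` on `I` be
induced by the multiplication of `A` (well-definedness is guaranteed by the
annihilation hypothesis `hann`).  Then `A[I] = (eAe/eIe) ⊕ I`, with multiplication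
`(b,x)·(c,y) = (bc, by + xc + xy)`, is an associative unital `K`-algebra with identity
`(e + eIe, 1 - e)`, and `{(0, x) | x ∈ I}` is a two-sided ideal of `A[I]`
isomorphic to `I`. -/
theorem stmt_4 [FiniteDimensional K A] (I : TwoSidedIdeal A) (e : A)
    (he : e * e = e)
    (hres : ∀ a : A, a * e - a ∈ I ∧ e * a - a ∈ I)
    (hann : ∀ x ∈ I, ∀ y ∈ I, (e * x * e) * y = 0 ∧ y * (e * x * e) = 0)
    (mQ : CornerQuot K A I e → CornerQuot K A I e → CornerQuot K A I e)
    (hmQ : ∀ x y : ↥(corner K A e),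
      mQ (Submodule.Quotient.mk x) (Submodule.Quotient.mk y) =
        Submodule.Quotient.mk ⟨x.1 * y.1, corner_mul_mem K A he x.2 y.2⟩)
    (lact : CornerQuot K A I e → A → A)
    (hlact : ∀ (x : ↥(corner K A e)) (y : A),
      lact (Submodule.Quotient.mk x) y = x.1 * y)
    (ract : A → CornerQuot K A I e → A)
    (hract : ∀ (y : A) (x : ↥(corner K A e)),
      ract y (Submodule.Quotient.mk x) = y * x.1)
    (hlactI : ∀ b y, y ∈ ISub K A I → lact b y ∈ ISub K A I)
    (hractI : ∀ y b, y ∈ ISub K A I → ract y b ∈ ISub K A I)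
    (hretr : ∃ σ : CornerQuot K A I e → A, ∃ hσ : ∀ q, σ q ∈ corner K A e,
      (∀ q, (Submodule.Quotient.mk ⟨σ q, hσ q⟩ : CornerQuot K A I e) = q) ∧
      (∀ q q', σ (mQ q q') = σ q * σ q') ∧
      (∀ q q', σ (q + q') = σ q + σ q') ∧
      (∀ (k : K) (q), σ (k • q) = k • σ q)) :
    letI m := aiMul K A I e mQ lact ract hlactI hractI
    letI one : AICarrier K A I e :=
      (Submodule.Quotient.mk ⟨e, e_mem_corner K A he⟩,
        ⟨1 - e, by
          have h := (hres 1).2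
          rw [mul_one] at h
          exact (show 1 - e ∈ I by simpa using I.neg_mem h)⟩)
    (∀ p q r : AICarrier K A I e, m (m p q) r = m p (m q r)) ∧
    (∀ p : AICarrier K A I e, m one p = p ∧ m p one = p) ∧
    (∀ p q r : AICarrier K A I e,
      m p (q + r) = m p q + m p r ∧ m (p + q) r = m p r + m q r) ∧
    (∀ (k : K) (p q : AICarrier K A I e),
      m (k • p) q = k • m p q ∧ m p (k • q) = k • m p q) ∧
    (∀ p q : AICarrier K A I e, p.1 = 0 → (m p q).1 = 0 ∧ (m q p).1 = 0) ∧
    (Function.Injective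
        (fun x : ↥(ISub K A I) => (((0 : CornerQuot K A I e), x) : AICarrier K A I e)) ∧
      (∀ x y : ↥(ISub K A I),
        (((0 : CornerQuot K A I e), x + y) : AICarrier K A I e) =
          ((0 : CornerQuot K A I e), x) + ((0 : CornerQuot K A I e), y)) ∧
      Set.range
          (fun x : ↥(ISub K A I) => (((0 : CornerQuot K A I e), x) : AICarrier K A I e)) =
        {p : AICarrier K A I e | p.1 = 0}) := by
  obtain ⟨σ, hσ, hσmk, hσmul, hσadd, hσsmul⟩ := hretr
  have hσ0 : σ 0 = 0 := by
    have h := hσadd 0 0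
    rw [add_zero] at h
    exact left_eq_add.mp h
  have heσ : ∀ q, e * σ q = σ q := by
    intro q
    have h : e * σ q * e = σ q := hσ q
    conv_lhs => rw [← h]
    rw [← mul_assoc, ← mul_assoc, he, h]
  have hσe : ∀ q, σ q * e = σ q := by
    intro q
    have h : e * σ q * e = σ q := hσ q
    conv_lhs => rw [← h]
    rw [mul_assoc, mul_assoc, he, ← mul_assoc, h]
  have hmQ' : ∀ q q', mQ q q' =
      Submodule.Quotient.mk ⟨σ q * σ q', corner_mul_mem K A he (hσ q) (hσ q')⟩ := by
    intro q q'
    have key := hmQ ⟨σ q, hσ q⟩ ⟨σ q', hσ q'⟩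
    rw [hσmk q, hσmk q'] at key
    exact key
  have hlact' : ∀ q y, lact q y = σ q * y := by
    intro q y
    have key := hlact ⟨σ q, hσ q⟩ y
    rw [hσmk q] at key
    exact key
  have hract' : ∀ y q, ract y q = y * σ q := by
    intro y q
    have key := hract y ⟨σ q, hσ q⟩
    rw [hσmk q] at key
    exact key
  refine ⟨?_, ?_, ?_, ?_, ?_, ?_, ?_, ?_⟩
  · -- associativity
    intro p q r
    refine Prod.ext ?_ (Subtype.ext ?_)
    · show mQ (mQ p.1 q.1) r.1 = mQ p.1 (mQ q.1 r.1)
      rw [hmQ' (mQ p.1 q.1) r.1, hmQ' p.1 (mQ q.1 r.1)]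
      congr 1
      apply Subtype.ext
      show σ (mQ p.1 q.1) * σ r.1 = σ p.1 * σ (mQ q.1 r.1)
      rw [hσmul, hσmul, mul_assoc]
    · simp only [aiMul, hlact', hract', hσmul]
      noncomm_ring
  · -- unit
    intro p
    constructor
    · refine Prod.ext ?_ (Subtype.ext ?_)
      · show mQ (Submodule.Quotient.mk ⟨e, e_mem_corner K A he⟩) p.1 = p.1
        have key := hmQ ⟨e, e_mem_corner K A he⟩ ⟨σ p.1, hσ p.1⟩
        rw [hσmk p.1] at key
        rw [key]
        conv_rhs => rw [← hσmk p.1]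
        congr 1
        exact Subtype.ext (heσ p.1)
      · show lact (Submodule.Quotient.mk ⟨e, e_mem_corner K A he⟩) p.2.1
            + ract (1 - e) p.1 + (1 - e) * p.2.1 = p.2.1
        rw [hlact (⟨e, e_mem_corner K A he⟩ : corner K A e) p.2.1, hract', sub_mul,
          sub_mul, heσ, one_mul, one_mul, sub_self]
        abel
    · refine Prod.ext ?_ (Subtype.ext ?_)
      · show mQ p.1 (Submodule.Quotient.mk ⟨e, e_mem_corner K A he⟩) = p.1
        have key := hmQ ⟨σ p.1, hσ p.1⟩ ⟨e, e_mem_corner K A he⟩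
        rw [hσmk p.1] at key
        rw [key]
        conv_rhs => rw [← hσmk p.1]
        congr 1
        exact Subtype.ext (hσe p.1)
      · show lact p.1 (1 - e) + ract p.2.1 (Submodule.Quotient.mk ⟨e, e_mem_corner K A he⟩)
            + p.2.1 * (1 - e) = p.2.1
        rw [hlact', hract p.2.1 (⟨e, e_mem_corner K A he⟩ : corner K A e), mul_sub,
          mul_sub, hσe, mul_one, mul_one, sub_self]
        abel
  · -- distributivity
    intro p q r
    constructor
    · refine Prod.ext ?_ (Subtype.ext ?_)
      · simp only [aiMul, hmQ', Prod.fst_add, hσadd]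
        rw [← Submodule.Quotient.mk_add]
        congr 1
        exact Subtype.ext (mul_add _ _ _)
      · simp only [aiMul, hlact', hract', Prod.snd_add, Prod.fst_add, hσadd,
          AddSubmonoid.coe_add, Submodule.coe_toAddSubmonoid]
        push_cast
        noncomm_ring
    · refine Prod.ext ?_ (Subtype.ext ?_)
      · simp only [aiMul, hmQ', Prod.fst_add, hσadd]
        rw [← Submodule.Quotient.mk_add]
        congr 1
        exact Subtype.ext (add_mul _ _ _)
      · simp only [aiMul, hlact', hract', Prod.snd_add, Prod.fst_add, hσadd,
          AddSubmonoid.coe_add, Submodule.coe_toAddSubmonoid]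
        push_cast
        noncomm_ring
  · -- smul
    intro k p q
    constructor
    · refine Prod.ext ?_ (Subtype.ext ?_)
      · simp only [aiMul, hmQ', Prod.smul_fst, hσsmul]
        rw [← Submodule.Quotient.mk_smul]
        congr 1
        exact Subtype.ext (smul_mul_assoc k _ _)
      · simp only [aiMul, hlact', hract', Prod.smul_snd, Prod.smul_fst, hσsmul,
          SetLike.val_smul, smul_add, smul_mul_assoc]
    · refine Prod.ext ?_ (Subtype.ext ?_)
      · simp only [aiMul, hmQ', Prod.smul_fst, hσsmul]
        rw [← Submodule.Quotient.mk_smul]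
        congr 1
        exact Subtype.ext (mul_smul_comm k _ _)
      · simp only [aiMul, hlact', hract', Prod.smul_snd, Prod.smul_fst, hσsmul,
          SetLike.val_smul, smul_add, smul_mul_assoc, mul_smul_comm]
  · -- ideal: first component vanishes
    intro p q hp
    constructor
    · simp only [aiMul, hmQ', hp, hσ0, zero_mul]
      exact congrArg _ (Subtype.ext rfl) |>.trans (Submodule.Quotient.mk_eq_zero _ |>.mpr (Submodule.zero_mem _))
    · simp only [aiMul, hmQ', hp, hσ0, mul_zero]
      exact congrArg _ (Subtype.ext rfl) |>.trans (Submodule.Quotient.mk_eq_zero _ |>.mpr (Submodule.zero_mem _))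
  · -- injective
    intro x y h
    exact (Prod.mk.injEq _ _ _ _ ▸ h).2
  · -- additive
    intro x y
    simp [Prod.ext_iff]
  · -- range
    ext p
    constructor
    · rintro ⟨x, rfl⟩
      rfl
    · intro hp
      exact ⟨p.2, by rw [← hp]⟩
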